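/- Let n ≥ 2 and let ∼ be a congruence of the near-semiring 𝒩. Suppose f ∼ g where f, g ∈ A^+(B_n) are of different support types, namely one of the following holds: (i) f = σ^{(k,l)}_{(p,q)} is a singleton-support map and g = ξ_{(u,v)} is a full-support constant map (u,v ∈ [n]); (ii) f = ξ_{(p,q)} is a full-support constant map and g = (i,j;σ) is an n-support map; or (iii) f = σ^{(k,l)}_{(p,q)} is a singleton-support map and g = (i,j;σ) is an n-support map. Then there exists h ∈ A^+(B_n) with h ≠ ξ_ϑ and h ∼ ξ_ϑ. -/

import Mathlib

/-!
Common setup: the Brandt semigroup `B n`, self-maps with pointwise addition and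
composition product, affine maps, the affine near-semiring `A⁺(Bₙ)`, and the
zero-symmetric near-semiring `𝒩 = A⁺(Bₙ) ∪ {0}`.
-/

/-- The Brandt semigroup `Bₙ`: pairs `(i,j)` with `i,j ∈ [n]`, together with the
zero element `ϑ` (represented by `none`). -/
abbrev B (n : ℕ) : Type := Option (Fin n × Fin n)

/-- Addition in the Brandt semigroup: `(i,j)+(k,l) = (i,l)` if `j = k`, and `ϑ` otherwise;
`ϑ` is absorbing. -/
def badd {n : ℕ} : B n → B n → B n
  | some (i, j), some (k, l) => if j = k then some (i, l) else none
  | _, _ => none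

/-- Pointwise addition of self-maps of `B n`:  `x(f+g) = xf + xg`. -/
def madd {n : ℕ} (f g : B n → B n) : B n → B n := fun x => badd (f x) (g x)

/-- The product of self-maps of `B n`: `x(fg) = (xf)g`. -/
def mcomp {n : ℕ} (f g : B n → B n) : B n → B n := fun x => g (f x)

/-- An additive endomorphism of the Brandt semigroup. -/
def IsEndo {n : ℕ} (e : B n → B n) : Prop := ∀ a b, e (badd a b) = badd (e a) (e b)

/-- An affine map: the pointwise sum of an additive endomorphism and a constant map. -/
def IsAffine {n : ℕ} (f : B n → B n) : Prop :=
  ∃ e c, IsEndo e ∧ ∀ x, f x = badd (e x) c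

/-- `A⁺(Bₙ)`: the subsemigroup of `(M(Bₙ), +)` generated by the affine maps. -/
inductive Aplus (n : ℕ) : (B n → B n) → Prop
  | affine {f : B n → B n} : IsAffine f → Aplus n f
  | add {f g : B n → B n} : Aplus n f → Aplus n g → Aplus n (madd f g)

lemma isEndo_constBot {n : ℕ} : IsEndo (fun _ : B n => (none : B n)) := by
  intro a b; rfl

lemma isEndo_constIdem {n : ℕ} (p : Fin n) :
    IsEndo (fun _ : B n => (some (p, p) : B n)) := by
  intro a b; simp [badd]

/-- Every constant map is affine. -/
lemma isAffine_const {n : ℕ} (c : B n) : IsAffine (fun _ : B n => c) := by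
  match c with
  | none => exact ⟨fun _ => none, none, isEndo_constBot, fun x => rfl⟩
  | some (p, q) =>
      exact ⟨fun _ => some (p, p), some (p, q), isEndo_constIdem p, fun x => by simp [badd]⟩

lemma aplus_const {n : ℕ} (c : B n) : Aplus n (fun _ : B n => c) :=
  Aplus.affine (isAffine_const c)

lemma aplus_comp_endo {n : ℕ} {e : B n → B n} (he : IsEndo e)
    {f : B n → B n} (hf : Aplus n f) : Aplus n (fun x => e (f x)) := by
  induction hf with
  | affine h =>
      rename_i f0
      obtain ⟨e', c, he', hfe⟩ := h
      refine Aplus.affine ⟨fun x => e (e' x), e c, fun a b => ?_, fun x => ?_⟩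
      · show e (e' (badd a b)) = badd (e (e' a)) (e (e' b))
        rw [he', he]
      · show e (f0 x) = badd (e (e' x)) (e c)
        rw [hfe, he]
  | add h1 h2 ih1 ih2 =>
      rename_i g1 g2
      have heq : (fun x => e (madd g1 g2 x))
          = madd (fun x => e (g1 x)) (fun x => e (g2 x)) := by
        funext x; exact he (g1 x) (g2 x)
      rw [heq]
      exact Aplus.add ih1 ih2

/-- `A⁺(Bₙ)` is closed under the product. -/
lemma aplus_comp {n : ℕ} {f g : B n → B n} (hf : Aplus n f) (hg : Aplus n g) :
    Aplus n (mcomp f g) := by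
  induction hg with
  | affine h =>
      rename_i g0
      obtain ⟨e, c, he, hge⟩ := h
      have heq : mcomp f g0 = madd (fun x => e (f x)) (fun _ => c) := by
        funext x; exact hge (f x)
      rw [heq]
      exact Aplus.add (aplus_comp_endo he hf) (aplus_const c)
  | add h1 h2 ih1 ih2 =>
      exact Aplus.add ih1 ih2

/-- `𝒩 = A⁺(Bₙ) ∪ {0}`: the zero-symmetric affine near-semiring, with a new
zero element `0` (represented by `none`) adjoined to `A⁺(Bₙ)`. -/
abbrev N (n : ℕ) : Type := Option {f : B n → B n // Aplus n f}

instance (n : ℕ) : Zero (N n) := ⟨none⟩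

/-- Addition in `𝒩`: `0` is the additive identity; on `A⁺(Bₙ)` it is pointwise addition. -/
instance (n : ℕ) : Add (N n) :=
  ⟨fun a b =>
    match a, b with
    | none, b => b
    | a, none => a
    | some f, some g => some ⟨madd f.1 g.1, Aplus.add f.2 g.2⟩⟩

/-- Multiplication in `𝒩`: `0` is absorbing; on `A⁺(Bₙ)` it is the product `fg`. -/
instance (n : ℕ) : Mul (N n) :=
  ⟨fun a b =>
    match a, b with
    | some f, some g => some ⟨mcomp f.1 g.1, aplus_comp f.2 g.2⟩
    | _, _ => none⟩

/-- The element of `𝒩` determined by a map in `A⁺(Bₙ)`. -/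
def ofA {n : ℕ} {f : B n → B n} (hf : Aplus n f) : N n := some ⟨f, hf⟩

/-- The constant map `ξ_c`, as an element of `𝒩`. -/
def xiN (n : ℕ) (c : B n) : N n := ofA (aplus_const c)

/-- `𝒞 = C_{Bₙ} ∪ {0}`: the constant maps together with `0`, as a subset of `𝒩`. -/
def Cset (n : ℕ) : Set (N n) := insert 0 (Set.range (xiN n))

/-- The relation `(A⁺(Bₙ) × A⁺(Bₙ)) ∪ {(0,0)}` on `𝒩`. -/
def theta (n : ℕ) (a b : N n) : Prop := (a ≠ 0 ∧ b ≠ 0) ∨ (a = 0 ∧ b = 0)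

/-- A congruence of the semigroup `(𝒩, +)`. -/
structure IsAddCong (n : ℕ) (r : N n → N n → Prop) : Prop where
  refl : ∀ a, r a a
  symm : ∀ {a b}, r a b → r b a
  trans : ∀ {a b c}, r a b → r b c → r a c
  add_right : ∀ {a b} (c), r a b → r (a + c) (b + c)
  add_left : ∀ {a b} (c), r a b → r (c + a) (c + b)

/-- The equivalence relations on `𝒩` whose class of `0` is a right ideal:
compatible with `+` on both sides and with `·` on the right. -/
structure IsRightCong (n : ℕ) (r : N n → N n → Prop) extends IsAddCong n r : Prop where
  mul_right : ∀ {a b} (c), r a b → r (a * c) (b * c)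

/-- A congruence of the near-semiring `𝒩`. -/
structure IsNSCong (n : ℕ) (r : N n → N n → Prop) extends IsAddCong n r : Prop where
  mul_right : ∀ {a b} (c), r a b → r (a * c) (b * c)
  mul_left : ∀ {a b} (c), r a b → r (c * a) (c * b)

/-- The singleton-support map `σ^{(k,l)}_{(p,q)}` sending `(k,l)` to `(p,q)` and
everything else to `ϑ`. -/
def sgl {n : ℕ} (k l p q : Fin n) : B n → B n :=
  fun x => if x = some (k, l) then some (p, q) else none

/-- The `n`-support map `(p,q;σ)` sending `(i,p)` to `(iσ,q)` and everything else to `ϑ`. -/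
def nsupp {n : ℕ} (p q : Fin n) (σ : Equiv.Perm (Fin n)) : B n → B n
  | some (i, j) => if j = p then some (σ i, q) else none
  | none => none

/-- The endomorphism `(i,j) ↦ (iσ, jσ)` of `Bₙ`. -/
def permEndo {n : ℕ} (σ : Equiv.Perm (Fin n)) : B n → B n
  | some (i, j) => some (σ i, σ j)
  | none => none

lemma isEndo_permEndo {n : ℕ} (σ : Equiv.Perm (Fin n)) : IsEndo (permEndo σ) := by
  rintro (_ | ⟨i, j⟩) (_ | ⟨k, l⟩) <;> simp [badd, permEndo]
  by_cases h : j = k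
  · simp [h, permEndo]
  · simp [h, fun hc => h (σ.injective hc), permEndo, badd]

lemma aplus_nsupp {n : ℕ} (p q : Fin n) (σ : Equiv.Perm (Fin n)) :
    Aplus n (nsupp p q σ) := by
  refine Aplus.affine ⟨permEndo σ, some (σ p, q), isEndo_permEndo σ, ?_⟩
  rintro (_ | ⟨i, j⟩)
  · rfl
  · show nsupp p q σ (some (i, j)) = badd (some (σ i, σ j)) (some (σ p, q))
    by_cases h : j = p
    · simp [nsupp, badd, h]
    · simp [nsupp, badd, h, fun hc => h (σ.injective hc)]

lemma sgl_eq_madd {n : ℕ} (k l p q : Fin n) :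
    sgl k l p q = madd (fun _ : B n => (some (p, q) : B n)) (nsupp l q (Equiv.swap k q)) := by
  funext x
  rcases x with _ | ⟨i, j⟩
  · rfl
  · by_cases hj : j = l
    · by_cases hi : i = k
      · subst hi; subst hj
        simp [sgl, madd, nsupp, badd, Equiv.swap_apply_left]
      · have hs : Equiv.swap k q i ≠ q := fun hc =>
          hi ((Equiv.swap k q).injective (hc.trans (Equiv.swap_apply_left k q).symm))
        simp [sgl, madd, nsupp, badd, hj, hi, Ne.symm hs]
    · simp [sgl, madd, nsupp, badd, hj]

lemma aplus_sgl {n : ℕ} (k l p q : Fin n) : Aplus n (sgl k l p q) := by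
  rw [sgl_eq_madd]
  exact Aplus.add (aplus_const _) (aplus_nsupp _ _ _)

/-- The singleton-support map `σ^{(k,l)}_{(p,q)}`, as an element of `𝒩`. -/
def sglN (n : ℕ) (k l p q : Fin n) : N n := ofA (aplus_sgl k l p q)

/-- The `n`-support map `(p,q;σ)`, as an element of `𝒩`. -/
def nsuppN (n : ℕ) (p q : Fin n) (σ : Equiv.Perm (Fin n)) : N n := ofA (aplus_nsupp p q σ)

lemma mul_xiN_ofA {n : ℕ} {f : B n → B n} (hf : Aplus n f) (c : B n) :
    xiN n c * ofA hf = xiN n (f c) := rfl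

lemma xiN_ne_zero {n : ℕ} (c : B n) : xiN n c ≠ 0 := fun h => Option.some_ne_none _ h

lemma xiN_some_ne_none {n : ℕ} (u v : Fin n) : xiN n (some (u, v)) ≠ xiN n none := by
  intro h
  injection h with h
  have := congrFun (congrArg Subtype.val h) none
  simp at this

/-- Let `n ≥ 2` and let `∼` be a congruence of the near-semiring `𝒩`.
Suppose `f ∼ g` where `f, g ∈ A⁺(Bₙ)` are of different support types: (i) a singleton-support
map and a full-support constant map, (ii) a full-support constant map and an `n`-support map,
or (iii) a singleton-support map and an `n`-support map. Then some `h ∈ A⁺(Bₙ)` with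
`h ≠ ξ_ϑ` satisfies `h ∼ ξ_ϑ`. -/
theorem stmt14 (n : ℕ) (hn : 2 ≤ n) (r : N n → N n → Prop) (hcong : IsNSCong n r)
    (f g : N n)
    (hcase :
      (∃ k l p q u v : Fin n, f = sglN n k l p q ∧ g = xiN n (some (u, v))) ∨
      (∃ p q i j : Fin n, ∃ σ : Equiv.Perm (Fin n),
        f = xiN n (some (p, q)) ∧ g = nsuppN n i j σ) ∨
      (∃ k l p q i j : Fin n, ∃ σ : Equiv.Perm (Fin n),
        f = sglN n k l p q ∧ g = nsuppN n i j σ))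
    (h : r f g) :
    ∃ h' : N n, h' ≠ 0 ∧ h' ≠ xiN n none ∧ r h' (xiN n none) := by
  haveI : NeZero n := ⟨by omega⟩
  have h01 : (0 : Fin n) ≠ 1 := by
    intro h
    have := congrArg Fin.val h
    rw [Fin.val_one', Nat.mod_eq_of_lt (by omega)] at this
    simp at this
  set other : Fin n → Fin n := fun x => if x = 0 then 1 else 0 with hother_def
  have hother : ∀ x, other x ≠ x := by
    intro x
    simp only [hother_def]
    split
    · rename_i hx; rw [hx]; exact h01.symm
    · rename_i hx; exact fun hc => hx hc.symm
  rcases hcase with ⟨k, l, p, q, u, v, hf, hg⟩ | ⟨p, q, i, j, σ, hf, hg⟩ |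
      ⟨k, l, p, q, i, j, σ, hf, hg⟩
  · -- singleton vs constant
    have hr := hcong.mul_left (xiN n (some (other k, l))) h
    rw [hf, hg] at hr
    have e1 : xiN n (some (other k, l)) * sglN n k l p q = xiN n none := by
      rw [show sglN n k l p q = ofA (aplus_sgl k l p q) from rfl,
        mul_xiN_ofA]
      have : sgl k l p q (some (other k, l)) = none := by
        simp [sgl, hother k]
      rw [this]
    have e2 : xiN n (some (other k, l)) * xiN n (some (u, v)) = xiN n (some (u, v)) := rfl
    rw [e1, e2] at hr
    exact ⟨xiN n (some (u, v)), xiN_ne_zero _, xiN_some_ne_none u v, hcong.symm hr⟩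
  · -- constant vs n-support
    have hr := hcong.mul_left (xiN n (some (0, other i))) h
    rw [hf, hg] at hr
    have e1 : xiN n (some (0, other i)) * xiN n (some (p, q)) = xiN n (some (p, q)) := rfl
    have e2 : xiN n (some (0, other i)) * nsuppN n i j σ = xiN n none := by
      rw [show nsuppN n i j σ = ofA (aplus_nsupp i j σ) from rfl, mul_xiN_ofA]
      have : nsupp i j σ (some ((0 : Fin n), other i)) = none := by
        simp [nsupp, hother i]
      rw [this]
    rw [e1, e2] at hr
    exact ⟨xiN n (some (p, q)), xiN_ne_zero _, xiN_some_ne_none p q, hr⟩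
  · -- singleton vs n-support
    have hr := hcong.mul_left (xiN n (some (other k, i))) h
    rw [hf, hg] at hr
    have e1 : xiN n (some (other k, i)) * sglN n k l p q = xiN n none := by
      rw [show sglN n k l p q = ofA (aplus_sgl k l p q) from rfl, mul_xiN_ofA]
      have : sgl k l p q (some (other k, i)) = none := by
        simp [sgl, hother k]
      rw [this]
    have e2 : xiN n (some (other k, i)) * nsuppN n i j σ = xiN n (some (σ (other k), j)) := by
      rw [show nsuppN n i j σ = ofA (aplus_nsupp i j σ) from rfl, mul_xiN_ofA]
      have : nsupp i j σ (some (other k, i)) = some (σ (other k), j) := by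
        simp [nsupp]
      rw [this]
    rw [e1, e2] at hr
    exact ⟨xiN n (some (σ (other k), j)), xiN_ne_zero _, xiN_some_ne_none _ _, hcong.symm hr⟩
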